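/- Let m ≥ 2 and suppose [1],[2],...,[2m²+m] is a cyclic ordering of the edges of K_{2m+1} in which every m cyclically consecutive edges are pairwise disjoint. For each i with 1 ≤ i ≤ m, let G_{[i]} be the spanning subgraph of K_{2m+1} whose edge set is the 2m+1 edges {[i],[i+m],[i+2m],...,[i+2m²]} (indices modulo 2m²+m). Then G_{[i]} is connected and has exactly 2m+1 edges on 2m+1 vertices (hence is unicyclic), and every vertex of G_{[i]} not on its unique cycle is adjacent in G_{[i]} to a vertex of that cycle. -/

import Mathlib

/-- Two edges of a graph (as unordered pairs of vertices) are *disjoint*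
if they share no vertex. -/
def edgesDisjoint {V : Type*} (e₁ e₂ : Sym2 V) : Prop :=
  ∀ v : V, v ∈ e₁ → v ∉ e₂

/-- The number of edges of a graph `G`. -/
noncomputable def edgeCount {V : Type*} (G : SimpleGraph V) : ℕ :=
  Nat.card G.edgeSet

/-- A linear ordering `f` of the edges of `G` has matching number at least `d`
if every `d` consecutive edges in the ordering are pairwise disjoint. -/
def LinearGood {V : Type*} (G : SimpleGraph V)
    (f : Fin (edgeCount G) ≃ G.edgeSet) (d : ℕ) : Prop :=
  ∀ j k : Fin (edgeCount G), j ≠ k → (j : ℕ) < (k : ℕ) + d → (k : ℕ) < (j : ℕ) + d →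
    edgesDisjoint (f j : Sym2 V) (f k : Sym2 V)

/-- The matching sequencibility `ms G`: the largest `d` (necessarily at most the
number of edges) for which some linear ordering of the edges of `G` has every
`d` consecutive edges forming a matching. -/
noncomputable def ms {V : Type*} (G : SimpleGraph V) : ℕ :=
  sSup {d : ℕ | d ≤ edgeCount G ∧ ∃ f : Fin (edgeCount G) ≃ G.edgeSet, LinearGood G f d}

/-- A cyclic ordering `f : ZMod N ≃ edges of G` has cyclic matching number at least `d`
if every `d` cyclically consecutive edges in the ordering are pairwise disjoint. -/
def CyclicGood {V : Type*} (G : SimpleGraph V) {N : ℕ}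
    (f : ZMod N ≃ G.edgeSet) (d : ℕ) : Prop :=
  ∀ (i : ZMod N) (j k : ℕ), j < d → k < d → j ≠ k →
    edgesDisjoint (f (i + (j : ZMod N)) : Sym2 V) (f (i + (k : ZMod N)) : Sym2 V)

/-- The cyclic matching sequencibility `cms G`: the largest `d` for which some
cyclic ordering of the edges of `G` has every `d` cyclically consecutive edges
forming a matching. -/
noncomputable def cms {V : Type*} (G : SimpleGraph V) : ℕ :=
  sSup {d : ℕ | ∃ f : ZMod (edgeCount G) ≃ G.edgeSet, CyclicGood G f d}

/-- The spanning subgraph `G_{[i]}` of `K_{2m+1}` on the `2m+1` edges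
`f(i), f(i+m), f(i+2m), …, f(i+2m²)` of a cyclic ordering `f`. -/
def Gsub (m i : ℕ)
    (f : ZMod (2 * m ^ 2 + m) ≃ (⊤ : SimpleGraph (Fin (2 * m + 1))).edgeSet) :
    SimpleGraph (Fin (2 * m + 1)) :=
  SimpleGraph.fromEdgeSet
    {e : Sym2 (Fin (2 * m + 1)) | ∃ k : ℕ, k ≤ 2 * m ∧
      e = (f ((i + k * m : ℕ) : ZMod (2 * m ^ 2 + m)) : Sym2 (Fin (2 * m + 1)))}


namespace Unicyclic

open SimpleGraph Finset


variable (m i : ℕ) (f : ZMod (2 * m ^ 2 + m) ≃ (⊤ : SimpleGraph (Fin (2 * m + 1))).edgeSet)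


lemma pigeon (v : Fin (2 * m + 1)) (g : ℕ → Sym2 (Fin (2 * m + 1)))
    (hmem : ∀ t, t < 2 * m + 1 → v ∈ g t)
    (hdiag : ∀ t, t < 2 * m + 1 → ¬ (g t).IsDiag)
    (hinj : ∀ t1 t2, t1 < 2 * m + 1 → t2 < 2 * m + 1 → g t1 = g t2 → t1 = t2) : False := by
  have hex : ∀ t, ∃ u, t < 2 * m + 1 → (s(v, u) = g t ∧ u ≠ v) := by
    intro t
    by_cases ht : t < 2 * m + 1
    · have h := hmem t ht
      refine ⟨Sym2.Mem.other' h, fun _ => ⟨Sym2.other_spec' h, ?_⟩⟩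
      intro he
      apply hdiag t ht
      rw [← Sym2.other_spec' h, he, Sym2.mk_isDiag_iff]
    · exact ⟨v, fun h => absurd h ht⟩
  choose y hy using hex
  have hle := Finset.card_le_card_of_injOn y
    (s := Finset.range (2 * m + 1)) (t := Finset.univ.erase v)
    (by
      intro t ht
      rw [Finset.mem_coe, Finset.mem_range] at ht
      rw [Finset.mem_coe, Finset.mem_erase]
      exact ⟨(hy t ht).2, Finset.mem_univ _⟩)
    (by
      intro t1 h1 t2 h2 heq
      simp only [Finset.coe_range, Set.mem_Iio] at h1 h2
      apply hinj t1 t2 h1 h2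
      rw [← (hy t1 h1).1, ← (hy t2 h2).1, heq])
  rw [Finset.card_range, Finset.card_erase_of_mem (Finset.mem_univ v), Finset.card_univ,
    Fintype.card_fin] at hle
  omega

lemma card_filter_mem {V : Type*} [Fintype V] [DecidableEq V] (E : Sym2 V) (hE : ¬E.IsDiag) :
    (Finset.univ.filter (· ∈ E)).card = 2 := by
  revert hE
  induction E using Sym2.ind with
  | _ x y =>
    intro hE
    rw [Sym2.mk_isDiag_iff] at hE
    have h2 : Finset.univ.filter (· ∈ s(x, y)) = {x, y} := by
      ext z; simp [Sym2.mem_iff]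
    rw [h2, Finset.card_insert_of_notMem (by simp [hE]), Finset.card_singleton]

def ed (k : ℕ) : Sym2 (Fin (2 * m + 1)) :=
  (f ((i + k * m : ℕ) : ZMod (2 * m ^ 2 + m)) : Sym2 (Fin (2 * m + 1)))

lemma f_not_diag (x : ZMod (2 * m ^ 2 + m)) : ¬ (f x : Sym2 (Fin (2 * m + 1))).IsDiag := by
  have h := (f x).2
  simp only [edgeSet_top, Set.mem_setOf_eq] at h
  exact h

lemma ed_not_diag (k : ℕ) : ¬ (ed m i f k).IsDiag := f_not_diag m f _

lemma ed_eq_iff (hm : 1 ≤ m) {a b : ℕ} : ed m i f a = ed m i f b ↔ a ≡ b [MOD 2 * m + 1] := by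
  have hNL : 2 * m ^ 2 + m = (2 * m + 1) * m := by ring
  constructor
  · intro h
    have h1 : ((i + a * m : ℕ) : ZMod (2 * m ^ 2 + m)) = ((i + b * m : ℕ) : ZMod (2 * m ^ 2 + m)) :=
      f.injective (Subtype.ext h)
    have h2 : i + a * m ≡ i + b * m [MOD 2 * m ^ 2 + m] :=
      (ZMod.natCast_eq_natCast_iff _ _ _).1 h1
    have h3 : a * m ≡ b * m [MOD (2 * m + 1) * m] := by
      rw [← hNL]; exact Nat.ModEq.add_left_cancel' i h2
    exact Nat.ModEq.mul_right_cancel' (by omega) h3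
  · intro h
    have h2 : a * m ≡ b * m [MOD 2 * m ^ 2 + m] := by
      rw [hNL]; exact h.mul_right' m
    have h3 : ((i + a * m : ℕ) : ZMod (2 * m ^ 2 + m)) = ((i + b * m : ℕ) : ZMod (2 * m ^ 2 + m)) :=
      (ZMod.natCast_eq_natCast_iff _ _ _).2 (Nat.ModEq.add_left i h2)
    unfold ed
    rw [h3]

lemma ed_period (hm : 1 ≤ m) (k : ℕ) : ed m i f (k + (2 * m + 1)) = ed m i f k :=
  (ed_eq_iff m i f hm).2 (by simp [Nat.ModEq, Nat.add_mod])

lemma ed_succ_ne (hm : 1 ≤ m) (k : ℕ) : ed m i f k ≠ ed m i f (k + 1) := by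
  intro h
  have h1 := (ed_eq_iff m i f hm).1 h
  have h2 := (Nat.modEq_iff_dvd' (Nat.le_succ k)).1 h1
  have h3 : k + 1 - k = 1 := by omega
  rw [h3] at h2
  have := Nat.le_of_dvd (by omega) h2
  omega

lemma ed_eq_w0 (k : ℕ) :
    ed m i f k
      = (f (((i + k * m : ℕ) : ZMod (2 * m ^ 2 + m)) + ((0 : ℕ) : ZMod (2 * m ^ 2 + m)))
          : Sym2 (Fin (2 * m + 1))) := by
  simp [ed]

lemma ed_eq_wm (k : ℕ) :
    ed m i f (k + 1)
      = (f (((i + k * m : ℕ) : ZMod (2 * m ^ 2 + m)) + ((m : ℕ) : ZMod (2 * m ^ 2 + m)))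
          : Sym2 (Fin (2 * m + 1))) := by
  have h : ((i + k * m : ℕ) : ZMod (2 * m ^ 2 + m)) + ((m : ℕ) : ZMod (2 * m ^ 2 + m))
      = ((i + (k + 1) * m : ℕ) : ZMod (2 * m ^ 2 + m)) := by
    push_cast
    ring
  rw [h]
  rfl

lemma wshift (x : ZMod (2 * m ^ 2 + m)) {a : ℕ} (ha : 1 ≤ a) :
    (x + 1) + ((a - 1 : ℕ) : ZMod (2 * m ^ 2 + m)) = x + ((a : ℕ) : ZMod (2 * m ^ 2 + m)) := by
  have h1 : a - 1 + 1 = a := by omega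
  conv_rhs => rw [← h1]
  push_cast
  ring

lemma shares (hm : 2 ≤ m) (hf : CyclicGood (⊤ : SimpleGraph (Fin (2 * m + 1))) f m) (k : ℕ) :
    ∃ u, u ∈ ed m i f k ∧ u ∈ ed m i f (k + 1) := by
  by_contra hno
  push_neg at hno
  set x : ZMod (2 * m ^ 2 + m) := ((i + k * m : ℕ) : ZMod (2 * m ^ 2 + m)) with hx
  classical
  -- disjointness of the m+1 edges f (x+a), a ≤ m
  have hdisj : ∀ a b : ℕ, a < b → b ≤ m →
      ∀ z : Fin (2 * m + 1), z ∈ (f (x + (a : ℕ)) : Sym2 (Fin (2 * m + 1))) →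
        z ∉ (f (x + (b : ℕ)) : Sym2 (Fin (2 * m + 1))) := by
    intro a b hab hbm z hz
    rcases Nat.lt_or_ge b m with hb | hb
    · exact hf x a b (lt_trans hab hb) hb (by omega) z hz
    · have hbm' : b = m := le_antisymm hbm hb
      intro hzm
      rw [hbm'] at hzm
      rcases Nat.eq_zero_or_pos a with ha | ha
      · rw [ha] at hz
        rw [← ed_eq_w0] at hz
        rw [← ed_eq_wm] at hzm
        exact hno z hz hzm
      · have h1 := hf (x + 1) (a - 1) (m - 1) (by omega) (by omega) (by omega) z
        rw [wshift m x ha] at h1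
        have h2 := h1 hz
        rw [wshift m x (by omega : 1 ≤ m)] at h2
        exact h2 hzm
  have hpair : ∀ a ∈ Finset.range (m + 1), ∀ b ∈ Finset.range (m + 1), a ≠ b →
      Disjoint (Finset.univ.filter (· ∈ (f (x + (a : ℕ)) : Sym2 (Fin (2 * m + 1)))))
        (Finset.univ.filter (· ∈ (f (x + (b : ℕ)) : Sym2 (Fin (2 * m + 1))))) := by
    intro a ha b hb hne
    rw [Finset.mem_range] at ha hb
    rw [Finset.disjoint_left]
    intro z hza hzb
    rw [Finset.mem_filter] at hza hzb
    rcases Nat.lt_or_ge a b with h | h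
    · exact hdisj a b h (by omega) z hza.2 hzb.2
    · exact hdisj b a (by omega) (by omega) z hzb.2 hza.2
  have hcard := Finset.card_biUnion hpair
  have hsum : ∑ a ∈ Finset.range (m + 1),
      (Finset.univ.filter (· ∈ (f (x + (a : ℕ)) : Sym2 (Fin (2 * m + 1))))).card
      = 2 * (m + 1) := by
    rw [Finset.sum_congr rfl (fun a _ => card_filter_mem _ (f_not_diag m f _))]
    rw [Finset.sum_const, Finset.card_range, smul_eq_mul]
    omega
  have hle : ((Finset.range (m + 1)).biUnion
      (fun a => Finset.univ.filter (· ∈ (f (x + (a : ℕ)) : Sym2 (Fin (2 * m + 1)))))).card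
      ≤ (Finset.univ : Finset (Fin (2 * m + 1))).card :=
    Finset.card_le_card (Finset.subset_univ _)
  rw [hcard, hsum, Finset.card_univ, Fintype.card_fin] at hle
  omega

lemma cover (hm : 2 ≤ m) (hf : CyclicGood (⊤ : SimpleGraph (Fin (2 * m + 1))) f m)
    (k : ℕ) (v : Fin (2 * m + 1))
    (hv : ∀ a : ℕ, a < m →
      v ∉ (f (((i + k * m : ℕ) : ZMod (2 * m ^ 2 + m)) + (a : ℕ)) : Sym2 (Fin (2 * m + 1)))) :
    v ∈ ed m i f (k + 1) := by
  classical
  by_contra hvk1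
  obtain ⟨u, hu1, hu2⟩ := shares m i f hm hf k
  set x : ZMod (2 * m ^ 2 + m) := ((i + k * m : ℕ) : ZMod (2 * m ^ 2 + m)) with hx
  set p := Sym2.Mem.other' hu1 with hp
  set q := Sym2.Mem.other' hu2 with hq
  have hpu : s(u, p) = ed m i f k := Sym2.other_spec' hu1
  have hqu : s(u, q) = ed m i f (k + 1) := Sym2.other_spec' hu2
  have hpmem : p ∈ ed m i f k := Sym2.other_mem' hu1
  have hqmem : q ∈ ed m i f (k + 1) := Sym2.other_mem' hu2
  have hpne : p ≠ u := by
    intro h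
    apply ed_not_diag m i f k
    rw [← hpu, Sym2.mk_isDiag_iff, h]
  have hqne : q ≠ u := by
    intro h
    apply ed_not_diag m i f (k + 1)
    rw [← hqu, Sym2.mk_isDiag_iff, h]
  have hpq : p ≠ q := by
    intro h
    apply ed_succ_ne m i f (by omega) k
    rw [← hpu, ← hqu, h]
  have hvnk : v ∉ ed m i f k := by
    rw [ed_eq_w0]
    exact hv 0 (by omega)
  have hvu : v ≠ u := fun h => hvnk (h ▸ hu1)
  have hvp : v ≠ p := fun h => hvnk (h ▸ hpmem)
  have hvq : v ≠ q := fun h => hvk1 (h ▸ hqmem)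
  -- the big finset
  have hpair : ∀ a ∈ Finset.Icc 1 (m - 1), ∀ b ∈ Finset.Icc 1 (m - 1), a ≠ b →
      Disjoint (Finset.univ.filter (· ∈ (f (x + (a : ℕ)) : Sym2 (Fin (2 * m + 1)))))
        (Finset.univ.filter (· ∈ (f (x + (b : ℕ)) : Sym2 (Fin (2 * m + 1))))) := by
    intro a ha b hb hne
    rw [Finset.mem_Icc] at ha hb
    rw [Finset.disjoint_left]
    intro z hza hzb
    rw [Finset.mem_filter] at hza hzb
    exact hf x a b (by omega) (by omega) hne z hza.2 hzb.2
  have hUcard : ((Finset.Icc 1 (m - 1)).biUnion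
      (fun a => Finset.univ.filter (· ∈ (f (x + (a : ℕ)) : Sym2 (Fin (2 * m + 1)))))).card
      = 2 * (m - 1) := by
    rw [Finset.card_biUnion hpair]
    rw [Finset.sum_congr rfl (fun a _ => card_filter_mem _ (f_not_diag m f _))]
    rw [Finset.sum_const, Nat.card_Icc, smul_eq_mul]
    have : m - 1 + 1 - 1 = m - 1 := by omega
    rw [this]
    omega
  have htriple : ({u, p, q} : Finset (Fin (2 * m + 1))).card = 3 := by
    rw [Finset.card_insert_of_notMem (by simp [Ne.symm hpne, Ne.symm hqne]),
      Finset.card_insert_of_notMem (by simp [hpq]), Finset.card_singleton]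
  have hdisjUP : Disjoint ({u, p, q} : Finset (Fin (2 * m + 1)))
      ((Finset.Icc 1 (m - 1)).biUnion
        (fun a => Finset.univ.filter (· ∈ (f (x + (a : ℕ)) : Sym2 (Fin (2 * m + 1)))))) := by
    rw [Finset.disjoint_left]
    intro z hz hzb
    rw [Finset.mem_biUnion] at hzb
    obtain ⟨a, ha, hza⟩ := hzb
    rw [Finset.mem_Icc] at ha
    rw [Finset.mem_filter] at hza
    simp only [Finset.mem_insert, Finset.mem_singleton] at hz
    rcases hz with hz | hz | hz
    · have h0 := hf x 0 a (by omega) (by omega) (by omega) z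
      rw [← ed_eq_w0] at h0
      exact h0 (by rw [hz]; exact hu1) hza.2
    · have h0 := hf x 0 a (by omega) (by omega) (by omega) z
      rw [← ed_eq_w0] at h0
      exact h0 (by rw [hz]; exact hpmem) hza.2
    · have h0 := hf (x + 1) (m - 1) (a - 1) (by omega) (by omega) (by omega) z
      rw [wshift m x (by omega : 1 ≤ m), wshift m x (by omega : 1 ≤ a), ← ed_eq_wm] at h0
      exact h0 (by rw [hz]; exact hqmem) hza.2
  have hKcard : (({u, p, q} : Finset (Fin (2 * m + 1))) ∪
      ((Finset.Icc 1 (m - 1)).biUnion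
        (fun a => Finset.univ.filter (· ∈ (f (x + (a : ℕ)) : Sym2 (Fin (2 * m + 1))))))).card
      = 2 * m + 1 := by
    rw [Finset.card_union_of_disjoint hdisjUP, htriple, hUcard]
    omega
  have hsub : (({u, p, q} : Finset (Fin (2 * m + 1))) ∪
      ((Finset.Icc 1 (m - 1)).biUnion
        (fun a => Finset.univ.filter (· ∈ (f (x + (a : ℕ)) : Sym2 (Fin (2 * m + 1)))))))
      ⊆ Finset.univ.erase v := by
    intro z hz
    rw [Finset.mem_union] at hz
    rw [Finset.mem_erase]
    refine ⟨?_, Finset.mem_univ _⟩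
    rcases hz with hz | hz
    · simp only [Finset.mem_insert, Finset.mem_singleton] at hz
      rcases hz with rfl | rfl | rfl
      · exact (Ne.symm hvu)
      · exact (Ne.symm hvp)
      · exact (Ne.symm hvq)
    · rw [Finset.mem_biUnion] at hz
      obtain ⟨a, ha, hza⟩ := hz
      rw [Finset.mem_Icc] at ha
      rw [Finset.mem_filter] at hza
      intro h
      exact hv a (by omega) (h ▸ hza.2)
  have hle := Finset.card_le_card hsub
  rw [hKcard, Finset.card_erase_of_mem (Finset.mem_univ v), Finset.card_univ,
    Fintype.card_fin] at hle
  omega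

lemma missed (hm : 2 ≤ m) (hf : CyclicGood (⊤ : SimpleGraph (Fin (2 * m + 1))) f m)
    (v : Fin (2 * m + 1)) : ∃ k : ℕ, k ≤ 2 * m ∧ ∀ a : ℕ, a < m →
      v ∉ (f (((i + k * m : ℕ) : ZMod (2 * m ^ 2 + m)) + (a : ℕ)) : Sym2 (Fin (2 * m + 1))) := by
  by_contra hno
  push_neg at hno
  have hch : ∀ k : ℕ, ∃ a : ℕ, a < m ∧ (k ≤ 2 * m →
      v ∈ (f (((i + k * m : ℕ) : ZMod (2 * m ^ 2 + m)) + (a : ℕ)) : Sym2 (Fin (2 * m + 1)))) := by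
    intro k
    by_cases hk : k ≤ 2 * m
    · obtain ⟨a, ha, hmem⟩ := hno k hk
      exact ⟨a, ha, fun _ => hmem⟩
    · exact ⟨0, by omega, fun h => absurd h hk⟩
  choose a ha hmem using hch
  apply pigeon m v
    (fun t => (f (((i + t * m : ℕ) : ZMod (2 * m ^ 2 + m)) + (a t : ℕ))
      : Sym2 (Fin (2 * m + 1))))
  · intro t ht
    exact hmem t (by omega)
  · intro t ht
    exact f_not_diag m f _
  · intro t1 t2 ht1 ht2 heq
    have h1 : ((i + t1 * m : ℕ) : ZMod (2 * m ^ 2 + m)) + ((a t1 : ℕ) : ZMod (2 * m ^ 2 + m))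
        = ((i + t1 * m + a t1 : ℕ) : ZMod (2 * m ^ 2 + m)) := by push_cast; ring
    have h2 : ((i + t2 * m : ℕ) : ZMod (2 * m ^ 2 + m)) + ((a t2 : ℕ) : ZMod (2 * m ^ 2 + m))
        = ((i + t2 * m + a t2 : ℕ) : ZMod (2 * m ^ 2 + m)) := by push_cast; ring
    have heq2 : ((i + t1 * m + a t1 : ℕ) : ZMod (2 * m ^ 2 + m))
        = ((i + t2 * m + a t2 : ℕ) : ZMod (2 * m ^ 2 + m)) := by
      rw [← h1, ← h2]
      exact f.injective (Subtype.ext heq)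
    have h3 : i + t1 * m + a t1 ≡ i + t2 * m + a t2 [MOD 2 * m ^ 2 + m] :=
      (ZMod.natCast_eq_natCast_iff _ _ _).1 heq2
    have h4 : t1 * m + a t1 ≡ t2 * m + a t2 [MOD 2 * m ^ 2 + m] := by
      have h5 : i + (t1 * m + a t1) ≡ i + (t2 * m + a t2) [MOD 2 * m ^ 2 + m] := by
        have e1 : i + (t1 * m + a t1) = i + t1 * m + a t1 := by ring
        have e2 : i + (t2 * m + a t2) = i + t2 * m + a t2 := by ring
        rw [e1, e2]; exact h3
      exact Nat.ModEq.add_left_cancel' i h5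
    have hlt1 : t1 * m + a t1 < 2 * m ^ 2 + m := by nlinarith [ha t1, hm]
    have hlt2 : t2 * m + a t2 < 2 * m ^ 2 + m := by nlinarith [ha t2, hm]
    have h6 : t1 * m + a t1 = t2 * m + a t2 := by
      have := h4
      unfold Nat.ModEq at this
      rwa [Nat.mod_eq_of_lt hlt1, Nat.mod_eq_of_lt hlt2] at this
    -- conclude t1 = t2
    have hm0 : 0 < m := by omega
    have e1 : (a t1 + m * t1) / m = t1 := by
      rw [Nat.add_mul_div_left _ _ hm0, Nat.div_eq_of_lt (ha t1)]
      omega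
    have e2 : (a t2 + m * t2) / m = t2 := by
      rw [Nat.add_mul_div_left _ _ hm0, Nat.div_eq_of_lt (ha t2)]
      omega
    have h7 : a t1 + m * t1 = a t2 + m * t2 := by
      have c1 : a t1 + m * t1 = t1 * m + a t1 := by ring
      have c2 : a t2 + m * t2 = t2 * m + a t2 := by ring
      rw [c1, c2]; exact h6
    rw [← e1, ← e2, h7]

lemma gsub_eq : Gsub m i f
    = SimpleGraph.fromEdgeSet {E | ∃ k : ℕ, k ≤ 2 * m ∧ E = ed m i f k} := rfl

lemma next_edge (hm : 2 ≤ m) (hf : CyclicGood (⊤ : SimpleGraph (Fin (2 * m + 1))) f m)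
    (v : Fin (2 * m + 1)) :
    ∃ k : ℕ, k ≤ 2 * m ∧ v ∉ ed m i f k ∧ v ∈ ed m i f (k + 1) := by
  obtain ⟨k, hk, hms⟩ := missed m i f hm hf v
  refine ⟨k, hk, ?_, cover m i f hm hf k v hms⟩
  rw [ed_eq_w0]
  exact hms 0 (by omega)

lemma mem_gsub_adj (hm : 1 ≤ m) (k : ℕ) (u w : Fin (2 * m + 1))
    (hu : u ∈ ed m i f k) (hw : w ∈ ed m i f k) (hne : u ≠ w) : (Gsub m i f).Adj u w := by
  rw [gsub_eq, SimpleGraph.fromEdgeSet_adj]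
  refine ⟨⟨k % (2 * m + 1), ?_, ?_⟩, hne⟩
  · have := Nat.mod_lt k (show 0 < 2 * m + 1 by omega)
    omega
  · have h1 : ed m i f (k % (2 * m + 1)) = ed m i f k :=
      (ed_eq_iff m i f hm).2 (Nat.mod_modEq k (2 * m + 1))
    rw [h1]
    exact ((Sym2.mem_and_mem_iff hne).1 ⟨hu, hw⟩).symm

lemma mem_gsub_del_adj (hm : 1 ≤ m) (E' : Sym2 (Fin (2 * m + 1))) (k : ℕ)
    (u w : Fin (2 * m + 1)) (hu : u ∈ ed m i f k) (hw : w ∈ ed m i f k) (hne : u ≠ w)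
    (hEk : ed m i f k ≠ E') :
    ((Gsub m i f) \ SimpleGraph.fromEdgeSet {E'}).Adj u w := by
  rw [SimpleGraph.sdiff_adj]
  refine ⟨mem_gsub_adj m i f hm k u w hu hw hne, ?_⟩
  intro h
  rw [SimpleGraph.fromEdgeSet_adj] at h
  apply hEk
  rw [(Sym2.mem_and_mem_iff hne).1 ⟨hu, hw⟩]
  exact Set.mem_singleton_iff.1 h.1

lemma reach_mem (hm : 1 ≤ m) (k : ℕ) (u w : Fin (2 * m + 1))
    (hu : u ∈ ed m i f k) (hw : w ∈ ed m i f k) : (Gsub m i f).Reachable u w := by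
  by_cases h : u = w
  · exact h ▸ SimpleGraph.Reachable.refl u
  · exact (mem_gsub_adj m i f hm k u w hu hw h).reachable

lemma reach_del_mem (hm : 1 ≤ m) (E' : Sym2 (Fin (2 * m + 1))) (k : ℕ)
    (u w : Fin (2 * m + 1)) (hu : u ∈ ed m i f k) (hw : w ∈ ed m i f k)
    (hEk : ed m i f k ≠ E') :
    ((Gsub m i f) \ SimpleGraph.fromEdgeSet {E'}).Reachable u w := by
  by_cases h : u = w
  · exact h ▸ SimpleGraph.Reachable.refl u
  · exact (mem_gsub_del_adj m i f hm E' k u w hu hw h hEk).reachable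

noncomputable def sv (k : ℕ) : Fin (2 * m + 1) :=
  if h : ∃ u, u ∈ ed m i f k ∧ u ∈ ed m i f (k + 1) then h.choose else ⟨0, Nat.succ_pos _⟩

lemma sv_spec (hm : 2 ≤ m) (hf : CyclicGood (⊤ : SimpleGraph (Fin (2 * m + 1))) f m) (k : ℕ) :
    sv m i f k ∈ ed m i f k ∧ sv m i f k ∈ ed m i f (k + 1) := by
  have h := shares m i f hm hf k
  rw [sv, dif_pos h]
  exact h.choose_spec

lemma reach_sv0 (hm : 2 ≤ m) (hf : CyclicGood (⊤ : SimpleGraph (Fin (2 * m + 1))) f m)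
    (k : ℕ) : (Gsub m i f).Reachable (sv m i f 0) (sv m i f k) := by
  induction k with
  | zero => exact SimpleGraph.Reachable.refl _
  | succ n ih =>
      exact ih.trans (reach_mem m i f (by omega) (n + 1) _ _
        (sv_spec m i f hm hf n).2 (sv_spec m i f hm hf (n + 1)).1)

lemma gsub_connected (hm : 2 ≤ m) (hf : CyclicGood (⊤ : SimpleGraph (Fin (2 * m + 1))) f m) :
    (Gsub m i f).Connected := by
  rw [SimpleGraph.connected_iff]
  refine ⟨?_, ⟨⟨0, Nat.succ_pos _⟩⟩⟩
  intro u v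
  obtain ⟨k1, _, _, hu⟩ := next_edge m i f hm hf u
  obtain ⟨k2, _, _, hv⟩ := next_edge m i f hm hf v
  have h1 := reach_mem m i f (by omega) (k1 + 1) u (sv m i f (k1 + 1)) hu
    (sv_spec m i f hm hf (k1 + 1)).1
  have h2 := reach_mem m i f (by omega) (k2 + 1) v (sv m i f (k2 + 1)) hv
    (sv_spec m i f hm hf (k2 + 1)).1
  exact ((h1.trans (reach_sv0 m i f hm hf (k1 + 1)).symm).trans
    (reach_sv0 m i f hm hf (k2 + 1))).trans h2.symm

lemma gsub_ncard (hm : 2 ≤ m) : (Gsub m i f).edgeSet.ncard = 2 * m + 1 := by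
  classical
  rw [gsub_eq, SimpleGraph.edgeSet_fromEdgeSet]
  have hset : {E : Sym2 (Fin (2 * m + 1)) | ∃ k : ℕ, k ≤ 2 * m ∧ E = ed m i f k}
      \ Sym2.diagSet
      = {E : Sym2 (Fin (2 * m + 1)) | ∃ k : ℕ, k ≤ 2 * m ∧ E = ed m i f k} := by
    ext E
    constructor
    · exact fun h => h.1
    · intro h
      refine ⟨h, ?_⟩
      obtain ⟨k, _, rfl⟩ := h
      exact ed_not_diag m i f k
  rw [hset]
  have himg : {E : Sym2 (Fin (2 * m + 1)) | ∃ k : ℕ, k ≤ 2 * m ∧ E = ed m i f k}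
      = ↑((Finset.range (2 * m + 1)).image (ed m i f)) := by
    ext E
    simp only [Set.mem_setOf_eq, Finset.coe_image, Set.mem_image, Finset.mem_coe,
      Finset.mem_range]
    constructor
    · rintro ⟨k, hk, rfl⟩; exact ⟨k, by omega, rfl⟩
    · rintro ⟨k, hk, rfl⟩; exact ⟨k, by omega, rfl⟩
  rw [himg, Set.ncard_coe_finset, Finset.card_image_of_injOn, Finset.card_range]
  intro a ha b hb h
  simp only [Finset.coe_range, Set.mem_Iio] at ha hb
  have := (ed_eq_iff m i f (by omega)).1 h
  unfold Nat.ModEq at this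
  rwa [Nat.mod_eq_of_lt ha, Nat.mod_eq_of_lt hb] at this

lemma sv_not_const (hm : 2 ≤ m) (hf : CyclicGood (⊤ : SimpleGraph (Fin (2 * m + 1))) f m)
    (k : ℕ) : ∃ t : ℕ, sv m i f (k + t) ≠ sv m i f k := by
  by_contra hno
  push_neg at hno
  apply pigeon m (sv m i f k) (fun t => ed m i f (k + t))
  · intro t _
    rw [← hno t]
    exact (sv_spec m i f hm hf (k + t)).1
  · intro t _
    exact ed_not_diag m i f _
  · intro t1 t2 ht1 ht2 heq
    have h1 := (ed_eq_iff m i f (by omega)).1 heq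
    have h2 : t1 ≡ t2 [MOD 2 * m + 1] := Nat.ModEq.add_left_cancel' k h1
    unfold Nat.ModEq at h2
    rwa [Nat.mod_eq_of_lt ht1, Nat.mod_eq_of_lt ht2] at h2

lemma cycle_at_sv (hm : 2 ≤ m) (hf : CyclicGood (⊤ : SimpleGraph (Fin (2 * m + 1))) f m)
    (k : ℕ) : ∃ c : (Gsub m i f).Walk (sv m i f k) (sv m i f k), c.IsCycle := by
  -- find the first index change
  have hne := sv_not_const m i f hm hf k
  set t0 := Nat.find hne with ht0
  have ht0spec : sv m i f (k + t0) ≠ sv m i f k := Nat.find_spec hne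
  have ht0min : ∀ t, t < t0 → sv m i f (k + t) = sv m i f k := by
    intro t ht
    by_contra h
    exact Nat.find_min hne ht h
  have ht0pos : 1 ≤ t0 := by
    rcases Nat.eq_zero_or_pos t0 with h | h
    · exfalso
      apply ht0spec
      have hkk : k + t0 = k := by omega
      rw [hkk]
    · exact h
  set j := k + t0 - 1 with hj
  have hj1 : j + 1 = k + t0 := by omega
  have hsvj : sv m i f j = sv m i f k := by
    have := ht0min (t0 - 1) (by omega)
    have hjj : k + (t0 - 1) = j := by omega
    rwa [hjj] at this
  have hsvne : sv m i f (j + 1) ≠ sv m i f j := by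
    rw [hsvj, hj1]; exact ht0spec
  -- the moving edge
  have hj1mem : sv m i f j ∈ ed m i f (j + 1) := (sv_spec m i f hm hf j).2
  have hj1mem' : sv m i f (j + 1) ∈ ed m i f (j + 1) := (sv_spec m i f hm hf (j + 1)).1
  have hAdj : (Gsub m i f).Adj (sv m i f j) (sv m i f (j + 1)) :=
    mem_gsub_adj m i f (by omega) (j + 1) _ _ hj1mem hj1mem' (Ne.symm hsvne)
  have hedge : s(sv m i f j, sv m i f (j + 1)) = ed m i f (j + 1) :=
    ((Sym2.mem_and_mem_iff (Ne.symm hsvne)).1 ⟨hj1mem, hj1mem'⟩).symm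
  -- reachability in the deleted graph
  have hreach : ∀ t : ℕ, t ≤ 2 * m - 1 →
      ((Gsub m i f) \ SimpleGraph.fromEdgeSet {ed m i f (j + 1)}).Reachable
        (sv m i f (j + 1)) (sv m i f (j + 1 + t)) := by
    intro t
    induction t with
    | zero => intro _; exact SimpleGraph.Reachable.refl _
    | succ n ih =>
        intro hn
        have hstep : ((Gsub m i f) \ SimpleGraph.fromEdgeSet {ed m i f (j + 1)}).Reachable
            (sv m i f (j + 1 + n)) (sv m i f (j + 1 + n + 1)) := by
          apply reach_del_mem m i f (by omega) _ (j + 1 + n + 1) _ _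
            (sv_spec m i f hm hf (j + 1 + n)).2 (sv_spec m i f hm hf (j + 1 + n + 1)).1
          intro h
          have h1 := (ed_eq_iff m i f (by omega)).1 h
          have h2 : n + 1 + (j + 1) ≡ 0 + (j + 1) [MOD 2 * m + 1] := by
            have e1 : j + 1 + n + 1 = n + 1 + (j + 1) := by ring
            have e2 : j + 1 = 0 + (j + 1) := by ring
            rw [← e1, ← e2]
            exact h1
          have h3 : n + 1 ≡ 0 [MOD 2 * m + 1] := Nat.ModEq.add_right_cancel' (j + 1) h2
          unfold Nat.ModEq at h3
          rw [Nat.mod_eq_of_lt (by omega), Nat.zero_mod] at h3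
          omega
        exact (ih (by omega)).trans hstep
  have hlast : ((Gsub m i f) \ SimpleGraph.fromEdgeSet {ed m i f (j + 1)}).Reachable
      (sv m i f (j + 2 * m)) (sv m i f j) := by
    apply reach_del_mem m i f (by omega) _ j _ _ ?_ (sv_spec m i f hm hf j).1 ?_
    · have h1 : sv m i f (j + 2 * m) ∈ ed m i f (j + 2 * m + 1) :=
        (sv_spec m i f hm hf (j + 2 * m)).2
      have h2 : ed m i f (j + 2 * m + 1) = ed m i f j := by
        have e1 : j + 2 * m + 1 = j + (2 * m + 1) := by ring
        rw [e1]
        exact ed_period m i f (by omega) j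
      rwa [h2] at h1
    · exact ed_succ_ne m i f (by omega) j
  have hreach2 : ((Gsub m i f) \ SimpleGraph.fromEdgeSet {ed m i f (j + 1)}).Reachable
      (sv m i f (j + 1)) (sv m i f j) := by
    have h1 := hreach (2 * m - 1) le_rfl
    have e1 : j + 1 + (2 * m - 1) = j + 2 * m := by omega
    rw [e1] at h1
    exact h1.trans hlast
  -- apply the cycle existence lemma
  have hkey := (SimpleGraph.adj_and_reachable_delete_edges_iff_exists_cycle
      (G := Gsub m i f) (v := sv m i f j) (w := sv m i f (j + 1))).1
  rw [hedge] at hkey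
  obtain ⟨u, p, hcyc, hmem⟩ := hkey ⟨hAdj, hreach2.symm⟩
  rw [← hedge] at hmem
  have hsup : sv m i f j ∈ p.support := SimpleGraph.Walk.fst_mem_support_of_mem_edges p hmem
  refine ⟨(p.rotate _ hsup).copy (by rw [hsvj]) (by rw [hsvj]), ?_⟩
  rw [SimpleGraph.Walk.isCycle_copy]
  exact hcyc.rotate hsup


end Unicyclic

/-- Suppose `m ≥ 2` and `f` is a cyclic ordering of the `2m² + m`
edges of `K_{2m+1}` in which every `m` cyclically consecutive edges are pairwise
disjoint.  For each `1 ≤ i ≤ m`, the spanning subgraph `G_{[i]}` with the `2m+1`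
edges `f(i), f(i+m), …, f(i+2m²)` is connected with exactly `2m+1` edges on its
`2m+1` vertices (hence unicyclic), and every vertex not lying on a cycle of
`G_{[i]}` is adjacent in `G_{[i]}` to a vertex lying on a cycle. -/
theorem unicyclic_structure (m : ℕ) (hm : 2 ≤ m)
    (f : ZMod (2 * m ^ 2 + m) ≃ (⊤ : SimpleGraph (Fin (2 * m + 1))).edgeSet)
    (hf : CyclicGood (⊤ : SimpleGraph (Fin (2 * m + 1))) f m)
    (i : ℕ) (hi1 : 1 ≤ i) (hi2 : i ≤ m) :
    (Gsub m i f).Connected ∧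
    (Gsub m i f).edgeSet.ncard = 2 * m + 1 ∧
    (∀ v : Fin (2 * m + 1), ¬ (∃ c : (Gsub m i f).Walk v v, c.IsCycle) →
      ∃ w : Fin (2 * m + 1), (Gsub m i f).Adj v w ∧
        ∃ c : (Gsub m i f).Walk w w, c.IsCycle) := by
  refine ⟨Unicyclic.gsub_connected m i f hm hf, Unicyclic.gsub_ncard m i f hm, ?_⟩
  intro v _
  obtain ⟨k, hk, hvk, hvk1⟩ := Unicyclic.next_edge m i f hm hf v
  refine ⟨Unicyclic.sv m i f k, ?_, ?_⟩
  · refine Unicyclic.mem_gsub_adj m i f (by omega) (k + 1) v (Unicyclic.sv m i f k) hvk1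
      (Unicyclic.sv_spec m i f hm hf k).2 ?_
    intro h
    apply hvk
    rw [h]
    exact (Unicyclic.sv_spec m i f hm hf k).1
  · exact Unicyclic.cycle_at_sv m i f hm hf k
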